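/- Let A be a real m×n matrix of rank k ≥ 1. Then there exist a list J of k distinct column indices of A and a real k×n matrix X such that: (i) A = A(:,J)·X, where A(:,J) is the m×k submatrix of A consisting of the columns indexed by J; (ii) the k×k submatrix X(:,J) of X formed by the columns of X indexed by J is the k×k identity matrix; and (iii) every entry of X is bounded by 1 in absolute value. (This is the 'interpolatory decomposition': k columns of A are selected as a basis for the column space of A and every remaining column is expressed, with coefficients of magnitude at most 1, in terms of the chosen ones.) -/

import Mathlib

open Matrix

/-- From a finite family `v` whose span has finrank `k`, extract a subfamily of size `k`
that is linearly independent and has the same span. -/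
lemma aux_extract {ι V : Type*} [Fintype ι] [AddCommGroup V] [Module ℝ V] (v : ι → V) (k : ℕ)
    (h : Module.finrank ℝ (Submodule.span ℝ (Set.range v)) = k) :
    ∃ f : Fin k → ι, LinearIndependent ℝ (v ∘ f) ∧
      Submodule.span ℝ (Set.range (v ∘ f)) = Submodule.span ℝ (Set.range v) := by
  classical
  obtain ⟨b, hb, hspan, hli⟩ := exists_linearIndependent ℝ (Set.range v)
  have hbfin : b.Finite := (Set.finite_range v).subset hb
  haveI : Fintype b := hbfin.fintype
  have hcard : Fintype.card b = k := by
    have := finrank_span_set_eq_card hli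
    rw [hspan, h] at this
    rw [← Set.toFinset_card, ← this]
  let e : Fin k ≃ b := (Fintype.equivFinOfCardEq hcard).symm
  have hchoice : ∀ p : Fin k, ∃ i : ι, v i = (e p : V) := fun p => (hb (e p).2)
  choose f hf using hchoice
  have hvf : v ∘ f = (fun x : b => (x : V)) ∘ e := funext fun p => hf p
  refine ⟨f, ?_, ?_⟩
  · rw [hvf]; exact hli.comp e e.injective
  · rw [hvf]
    have : Set.range ((fun x : b => (x : V)) ∘ e) = b := by
      rw [Set.range_comp, Equiv.range_eq_univ, Set.image_univ, Subtype.range_coe]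
    rw [this, hspan]

theorem stmt_3 (m n k : ℕ) (hk : 1 ≤ k)
    (A : Matrix (Fin m) (Fin n) ℝ) (hrank : A.rank = k) :
    ∃ (J : Fin k → Fin n) (X : Matrix (Fin k) (Fin n) ℝ),
      Function.Injective J ∧
      A = A.submatrix id J * X ∧
      X.submatrix id J = (1 : Matrix (Fin k) (Fin k) ℝ) ∧
      ∀ i j, |X i j| ≤ 1 := by
  classical
  have hm : 0 < m := lt_of_lt_of_le hk (hrank ▸ A.rank_le_height)
  have hn : 0 < n := lt_of_lt_of_le hk (hrank ▸ A.rank_le_width)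
  haveI : Nonempty (Fin m) := ⟨⟨0, hm⟩⟩
  haveI : Nonempty (Fin n) := ⟨⟨0, hn⟩⟩
  -- Step 1: find some nonzero k×k minor.
  have hcols : Module.finrank ℝ (Submodule.span ℝ (Set.range Aᵀ)) = k := by
    rw [← hrank]; exact A.rank_eq_finrank_span_cols.symm
  obtain ⟨J₀, hJ₀li, -⟩ := aux_extract Aᵀ k hcols
  -- the m×k matrix of selected columns
  set B : Matrix (Fin m) (Fin k) ℝ := A.submatrix id J₀ with hB
  have hBt : Bᵀ = Aᵀ ∘ J₀ := by ext p i; rfl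
  have hBrank : B.rank = k := by
    rw [B.rank_eq_finrank_span_cols, Matrix.col, hBt, finrank_span_eq_card hJ₀li, Fintype.card_fin]
  have hrows : Module.finrank ℝ (Submodule.span ℝ (Set.range (fun i : Fin m => B i))) = k := by
    have h := B.rank_eq_finrank_span_row; rw [hBrank] at h; exact h.symm
  obtain ⟨I₀, hI₀li, -⟩ := aux_extract (fun i : Fin m => B i) k hrows
  have hdet₀ : (A.submatrix I₀ J₀).det ≠ 0 := by
    have hrowsInd : LinearIndependent ℝ (fun p => (A.submatrix I₀ J₀) p) := hI₀li
    have hU : IsUnit (A.submatrix I₀ J₀) := linearIndependent_rows_iff_isUnit.mp hrowsInd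
    exact ((Matrix.isUnit_iff_isUnit_det _).mp hU).ne_zero
  -- Step 2: maximize |det| over all pairs of index tuples.
  obtain ⟨⟨I, J⟩, hmax⟩ := Finite.exists_max
    (fun p : (Fin k → Fin m) × (Fin k → Fin n) => |(A.submatrix p.1 p.2).det|)
  set M : Matrix (Fin k) (Fin k) ℝ := A.submatrix I J with hM
  have hdpos : 0 < |M.det| :=
    lt_of_lt_of_le (abs_pos.mpr hdet₀) (hmax (I₀, J₀))
  have hd : M.det ≠ 0 := fun h => by simp [h] at hdpos
  have hUM : IsUnit M := (Matrix.isUnit_iff_isUnit_det _).mpr (isUnit_iff_ne_zero.mpr hd)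
  -- the candidate X, defined by Cramer's rule
  set X : Matrix (Fin k) (Fin n) ℝ :=
    fun p j => (M.det)⁻¹ * (M.updateCol p (fun q => A (I q) j)).det with hX
  -- update column = submatrix with updated column indices
  have hupd : ∀ (p : Fin k) (j : Fin n),
      M.updateCol p (fun q => A (I q) j) = A.submatrix I (Function.update J p j) := by
    intro p j
    ext q r
    by_cases hr : r = p <;>
      simp [Matrix.updateCol_apply, Function.update_apply, hr, hM]
  -- bound on entries
  have hbound : ∀ p j, |X p j| ≤ 1 := by
    intro p j
    rw [hX]
    rw [abs_mul, abs_inv]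
    rw [inv_mul_le_iff₀ hdpos, mul_one, hupd]
    exact hmax (I, Function.update J p j)
  -- injectivity of J
  have hJinj : Function.Injective J := by
    intro a b hab
    by_contra hne
    exact hd (Matrix.det_zero_of_column_eq hne (fun q => by simp [hM, hab]))
  -- X restricted to J is the identity
  have hXJ : X.submatrix id J = (1 : Matrix (Fin k) (Fin k) ℝ) := by
    ext p r
    simp only [Matrix.submatrix_apply, id_eq]; simp only [hX]
    by_cases hrp : r = p
    · subst hrp
      have : M.updateCol r (fun q => A (I q) (J r)) = M := by
        ext q s
        by_cases hs : s = r <;> simp [Matrix.updateCol_apply, hs, hM]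
      rw [this, inv_mul_cancel₀ hd, Matrix.one_apply_eq]
    · have : (M.updateCol p (fun q => A (I q) (J r))).det = 0 := by
        apply Matrix.det_zero_of_column_eq (Ne.symm hrp)
        intro q
        by_cases hq : r = p <;> simp [Matrix.updateCol_apply, hrp, hM]
      rw [this, mul_zero, Matrix.one_apply_ne (Ne.symm hrp)]
  -- columns indexed by J are linearly independent
  have hMcols : LinearIndependent ℝ (fun p => Aᵀ (J p)) := by
    rw [Fintype.linearIndependent_iff]
    intro c hc a
    have hMc : M *ᵥ c = 0 := by
      ext q
      have := congrFun hc (I q)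
      simpa [Matrix.mulVec, dotProduct, mul_comm, hM] using this
    have := (mulVec_injective_iff_isUnit.mpr hUM) (by rw [hMc, Matrix.mulVec_zero] : M *ᵥ c = M *ᵥ 0)
    exact congrFun this a
  -- span of those columns equals the full column span
  have hspanJ : Submodule.span ℝ (Set.range (fun p => Aᵀ (J p)))
      = Submodule.span ℝ (Set.range Aᵀ) := by
    apply Submodule.eq_of_le_of_finrank_le
    · apply Submodule.span_mono
      rintro _ ⟨p, rfl⟩
      exact ⟨J p, rfl⟩
    · rw [hcols, finrank_span_eq_card hMcols, Fintype.card_fin]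
  -- the factorization
  have hfact : A = A.submatrix id J * X := by
    ext i j
    have hmem : Aᵀ j ∈ Submodule.span ℝ (Set.range (fun p => Aᵀ (J p))) := by
      rw [hspanJ]; exact Submodule.subset_span ⟨j, rfl⟩
    obtain ⟨c, hc⟩ := (Submodule.mem_span_range_iff_exists_fun ℝ).mp hmem
    -- X's column j equals c
    have hMc : M *ᵥ c = fun q => A (I q) j := by
      ext q
      have := congrFun hc (I q)
      simpa [Matrix.mulVec, dotProduct, mul_comm, hM] using this
    have hXc : (fun p => X p j) = c := by
      have h1 : M *ᵥ (fun p => X p j) = fun q => A (I q) j := by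
        have : (fun p => X p j) = (M.det)⁻¹ • Matrix.cramer M (fun q => A (I q) j) := by
          ext p
          simp [hX, Matrix.cramer_apply, smul_eq_mul]
        rw [this, Matrix.mulVec_smul, Matrix.mulVec_cramer, smul_smul,
          inv_mul_cancel₀ hd, one_smul]
      apply mulVec_injective_iff_isUnit.mpr hUM
      rw [h1, hMc]
    have := congrFun hc i
    simp only [Matrix.transpose_apply] at this
    rw [Matrix.mul_apply]
    rw [← this]
    rw [← hXc]
    simp [mul_comm]
  exact ⟨J, X, hJinj, hfact, hXJ, hbound⟩
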